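/- Let 𝔤 be a finite-dimensional real 2-step nilpotent Lie algebra and let u, v ∈ L¹([0,1],𝔤) satisfy ∫₀¹ v(t) dt = 0 and ∫₀¹ ⁅∫₀ᵗ u(s) ds, v(t)⁆ dt = 0. Then E(u+v) = E(u) + E(v), where E is the endpoint functional. -/

import Mathlib

open MeasureTheory

/-- The endpoint of the horizontal curve with control `u` in the 2-step model group `(𝔤,∗)`. -/
noncomputable def endpointMap {L : Type*} [NormedAddCommGroup L] [NormedSpace ℝ L]
    (bracket : L →ₗ[ℝ] L →ₗ[ℝ] L) (u : ℝ → L) : L :=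
  (∫ t in (0:ℝ)..1, u t) +
    (2⁻¹ : ℝ) • ∫ t in (0:ℝ)..1, bracket (∫ s in (0:ℝ)..t, u s) (u t)

section Aux

variable {L : Type*} [NormedAddCommGroup L] [NormedSpace ℝ L]

lemma aux_integrable (B : L →L[ℝ] L →L[ℝ] L) {w c : ℝ → L}
    (hw : IntervalIntegrable w volume 0 1) (hc : ContinuousOn c (Set.Icc 0 1)) :
    IntervalIntegrable (fun t => B (c t) (w t)) volume 0 1 := by
  obtain ⟨C, hC⟩ := (isCompact_Icc (a := (0:ℝ)) (b := 1)).exists_bound_of_continuousOn hc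
  have hC0 : 0 ≤ C := le_trans (norm_nonneg _) (hC 0 (by constructor <;> norm_num))
  apply (hw.smul (‖B‖ * C)).mono_fun
  · have h1 : AEStronglyMeasurable c (volume.restrict (Set.uIoc (0:ℝ) 1)) := by
      rw [Set.uIoc_of_le zero_le_one]
      exact (hc.mono Set.Ioc_subset_Icc_self).aestronglyMeasurable measurableSet_Ioc
    have h2 : AEStronglyMeasurable w (volume.restrict (Set.uIoc (0:ℝ) 1)) := by
      rw [Set.uIoc_of_le zero_le_one]; exact hw.1.aestronglyMeasurable
    exact B.continuous₂.comp_aestronglyMeasurable (h1.prodMk h2)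
  · filter_upwards [ae_restrict_mem measurableSet_uIoc] with t ht
    have ht' : t ∈ Set.Icc (0:ℝ) 1 := by
      rw [Set.uIoc_of_le zero_le_one] at ht; exact Set.Ioc_subset_Icc_self ht
    have hBC : 0 ≤ ‖B‖ * C := mul_nonneg (norm_nonneg B) hC0
    calc ‖B (c t) (w t)‖ ≤ ‖B‖ * ‖c t‖ * ‖w t‖ := B.le_opNorm₂ _ _
      _ ≤ ‖B‖ * C * ‖w t‖ :=
          mul_le_mul_of_nonneg_right
            (mul_le_mul_of_nonneg_left (hC t ht') (norm_nonneg B)) (norm_nonneg _)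
      _ = ‖((‖B‖ * C) • w) t‖ := by
          simp [norm_smul, Real.norm_of_nonneg hBC]

lemma aux_prod (B : L →L[ℝ] L →L[ℝ] L) {f g : ℝ → L} {μ : Measure ℝ} [SFinite μ]
    (hf : Integrable f μ) (hg : Integrable g μ) :
    Integrable (fun p : ℝ × ℝ => B (f p.1) (g p.2)) (μ.prod μ) := by
  have hm : AEStronglyMeasurable (fun p : ℝ × ℝ => B (f p.1) (g p.2)) (μ.prod μ) :=
    B.continuous₂.comp_aestronglyMeasurable (hf.1.comp_fst.prodMk hg.1.comp_snd)
  refine ((hf.norm.mul_prod hg.norm).const_mul ‖B‖).mono' hm ?_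
  filter_upwards with p
  calc ‖B (f p.1) (g p.2)‖ ≤ ‖B‖ * ‖f p.1‖ * ‖g p.2‖ := B.le_opNorm₂ _ _
    _ = ‖B‖ * (‖f p.1‖ * ‖g p.2‖) := mul_assoc _ _ _

lemma aux_parts [CompleteSpace L] (B : L →L[ℝ] L →L[ℝ] L) {f g : ℝ → L}
    (hf : IntervalIntegrable f volume 0 1) (hg : IntervalIntegrable g volume 0 1) :
    (∫ t in (0:ℝ)..1, B (∫ s in (0:ℝ)..t, f s) (g t))
      + (∫ t in (0:ℝ)..1, B (f t) (∫ s in (0:ℝ)..t, g s))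
    = B (∫ t in (0:ℝ)..1, f t) (∫ t in (0:ℝ)..1, g t) := by
  set μ : Measure ℝ := volume.restrict (Set.Ioc (0:ℝ) 1) with hμ
  have hf1 : Integrable f μ := hf.1
  have hg1 : Integrable g μ := hg.1
  set F : ℝ × ℝ → L := fun p => B (f p.1) (g p.2) with hFdef
  have hF : Integrable F (μ.prod μ) := aux_prod B hf1 hg1
  set S : Set (ℝ × ℝ) := {p | p.1 ≤ p.2} with hSdef
  have hS : MeasurableSet S := measurableSet_le measurable_fst measurable_snd
  have hG : Integrable (S.indicator F) (μ.prod μ) := hF.indicator hS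
  have hG' : Integrable (Sᶜ.indicator F) (μ.prod μ) := hF.indicator hS.compl
  -- total integral
  have htot : ∫ p, F p ∂(μ.prod μ) = B (∫ t in (0:ℝ)..1, f t) (∫ t in (0:ℝ)..1, g t) := by
    rw [integral_prod _ hF]
    have h1 : ∀ s, (∫ t, B (f s) (g t) ∂μ) = B (f s) (∫ t, g t ∂μ) :=
      fun s => (B (f s)).integral_comp_comm hg1
    simp_rw [hFdef, h1]
    have h2 : (∫ s, B (f s) (∫ t, g t ∂μ) ∂μ)
        = (B.flip (∫ t, g t ∂μ)) (∫ s, f s ∂μ) :=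
      (B.flip (∫ t, g t ∂μ)).integral_comp_comm hf1
    rw [h2, intervalIntegral.integral_of_le zero_le_one,
      intervalIntegral.integral_of_le zero_le_one]
    rfl
  -- first (triangle s ≤ t) integral
  have hI2 : ∫ p, S.indicator F p ∂(μ.prod μ)
      = ∫ t in (0:ℝ)..1, B (∫ s in (0:ℝ)..t, f s) (g t) := by
    rw [integral_prod_symm _ hG, intervalIntegral.integral_of_le zero_le_one]
    apply integral_congr_ae
    filter_upwards [ae_restrict_mem measurableSet_Ioc] with t ht
    have h1 : (fun s => S.indicator F (s, t))
        = (Set.Iic t).indicator (fun s => B (f s) (g t)) := by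
      funext s
      by_cases hst : s ≤ t <;> simp [hSdef, hFdef, Set.indicator, hst]
    rw [h1, integral_indicator measurableSet_Iic, hμ,
      Measure.restrict_restrict measurableSet_Iic]
    have h2 : Set.Iic t ∩ Set.Ioc 0 1 = Set.Ioc 0 t := by
      ext x
      simp only [Set.mem_inter_iff, Set.mem_Iic, Set.mem_Ioc]
      exact ⟨fun h => ⟨h.2.1, h.1⟩, fun h => ⟨h.2, h.1, h.2.trans ht.2⟩⟩
    rw [h2]
    have hfi : IntegrableOn f (Set.Ioc 0 t) volume :=
      hf.1.mono_set (Set.Ioc_subset_Ioc_right ht.2)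
    have h3 : (∫ s in Set.Ioc (0:ℝ) t, B (f s) (g t))
        = (B.flip (g t)) (∫ s in Set.Ioc (0:ℝ) t, f s) :=
      (B.flip (g t)).integral_comp_comm hfi
    rw [h3, intervalIntegral.integral_of_le ht.1.le]
    rfl
  -- second (triangle t < s) integral
  have hI3 : ∫ p, Sᶜ.indicator F p ∂(μ.prod μ)
      = ∫ t in (0:ℝ)..1, B (f t) (∫ s in (0:ℝ)..t, g s) := by
    rw [integral_prod _ hG', intervalIntegral.integral_of_le zero_le_one]
    apply integral_congr_ae
    filter_upwards [ae_restrict_mem measurableSet_Ioc] with s hs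
    have h1 : (fun t => Sᶜ.indicator F (s, t))
        = (Set.Iio s).indicator (fun t => B (f s) (g t)) := by
      funext t
      by_cases hst : t < s <;>
        simp [hSdef, hFdef, Set.indicator, hst, not_le.mpr, not_lt.mp,
          le_of_not_gt, not_le_of_gt]
    rw [h1, integral_indicator measurableSet_Iio, hμ,
      Measure.restrict_restrict measurableSet_Iio]
    have h2 : Set.Iio s ∩ Set.Ioc 0 1 = Set.Ioo 0 s := by
      ext x
      simp only [Set.mem_inter_iff, Set.mem_Iio, Set.mem_Ioc, Set.mem_Ioo]
      exact ⟨fun h => ⟨h.2.1, h.1⟩, fun h => ⟨h.2, h.1, h.2.le.trans hs.2⟩⟩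
    rw [h2, ← integral_Ioc_eq_integral_Ioo]
    have hgi : IntegrableOn g (Set.Ioc 0 s) volume :=
      hg.1.mono_set (Set.Ioc_subset_Ioc_right hs.2)
    rw [(B (f s)).integral_comp_comm hgi, intervalIntegral.integral_of_le hs.1.le]
  -- combine
  rw [← hI2, ← hI3, ← htot, ← integral_add hG hG']
  congr 1
  funext p
  exact congrFun (Set.indicator_self_add_compl S F) p

end Aux

/-- if `∫₀¹ v = 0` and `∫₀¹ ⁅∫₀ᵗ u, v(t)⁆ dt = 0` then
`E(u+v) = E(u) + E(v)`. -/
theorem stmt_1 {L : Type*} [NormedAddCommGroup L] [NormedSpace ℝ L] [FiniteDimensional ℝ L]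
    (bracket : L →ₗ[ℝ] L →ₗ[ℝ] L)
    (halt : ∀ x : L, bracket x x = 0)
    (h2step : ∀ x y z : L, bracket (bracket x y) z = 0)
    (u v : ℝ → L)
    (hu : IntervalIntegrable u volume 0 1)
    (hv : IntervalIntegrable v volume 0 1)
    (hv0 : (∫ t in (0:ℝ)..1, v t) = 0)
    (huv : (∫ t in (0:ℝ)..1, bracket (∫ s in (0:ℝ)..t, u s) (v t)) = 0) :
    endpointMap bracket (fun t => u t + v t) =
      endpointMap bracket u + endpointMap bracket v := by
  classical
  -- continuous bilinear version of the bracket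
  set B : L →L[ℝ] L →L[ℝ] L :=
    LinearMap.toContinuousLinearMap
      ((LinearMap.toContinuousLinearMap :
          (L →ₗ[ℝ] L) ≃ₗ[ℝ] (L →L[ℝ] L)).toLinearMap ∘ₗ bracket) with hBdef
  have hB : ∀ x y : L, B x y = bracket x y := by
    intro x y
    simp [hBdef]
  have hantiB : ∀ x y : L, B x y = - B y x := by
    intro x y
    have h := halt (x + y)
    simp only [map_add, LinearMap.add_apply, halt, zero_add, add_zero] at h
    rw [hB, hB]
    exact eq_neg_of_add_eq_zero_left (by rw [add_comm]; exact h)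
  set U : ℝ → L := fun t => ∫ s in (0:ℝ)..t, u s with hUdef
  set V : ℝ → L := fun t => ∫ s in (0:ℝ)..t, v s with hVdef
  have hUc : ContinuousOn U (Set.Icc 0 1) := by
    simpa [Set.uIcc_of_le (zero_le_one (α := ℝ))] using
      intervalIntegral.continuousOn_primitive_interval' hu Set.left_mem_uIcc
  have hVc : ContinuousOn V (Set.Icc 0 1) := by
    simpa [Set.uIcc_of_le (zero_le_one (α := ℝ))] using
      intervalIntegral.continuousOn_primitive_interval' hv Set.left_mem_uIcc
  have hUu := aux_integrable B hu hUc
  have hUv := aux_integrable B hv hUc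
  have hVu := aux_integrable B hu hVc
  have hVv := aux_integrable B hv hVc
  -- cross term 1
  have cross1 : (∫ t in (0:ℝ)..1, B (U t) (v t)) = 0 := by
    simpa [hB] using huv
  -- cross term 2 via integration by parts (Fubini)
  have parts := aux_parts B hu hv
  rw [hv0] at parts
  simp only [map_zero, ContinuousLinearMap.zero_apply] at parts
  rw [cross1, zero_add] at parts
  have cross2 : (∫ t in (0:ℝ)..1, B (V t) (u t)) = 0 := by
    have h1 : (∫ t in (0:ℝ)..1, B (V t) (u t))
        = ∫ t in (0:ℝ)..1, -(B (u t) (V t)) := by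
      apply intervalIntegral.integral_congr
      intro t _
      exact hantiB _ _
    rw [h1, intervalIntegral.integral_neg, parts, neg_zero]
  -- expand the integrand for `u + v`
  have hmono : ∀ t ∈ Set.Icc (0:ℝ) 1, ∀ {w : ℝ → L},
      IntervalIntegrable w volume 0 1 → IntervalIntegrable w volume 0 t := by
    intro t ht w hw
    apply hw.mono_set'
    rw [Set.uIoc_of_le ht.1, Set.uIoc_of_le zero_le_one]
    exact Set.Ioc_subset_Ioc_right ht.2
  have hsplit : (∫ t in (0:ℝ)..1, B (∫ s in (0:ℝ)..t, (u s + v s)) (u t + v t))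
      = (∫ t in (0:ℝ)..1, B (U t) (u t)) + (∫ t in (0:ℝ)..1, B (U t) (v t))
        + ((∫ t in (0:ℝ)..1, B (V t) (u t)) + (∫ t in (0:ℝ)..1, B (V t) (v t))) := by
    have h1 : Set.EqOn (fun t => B (∫ s in (0:ℝ)..t, (u s + v s)) (u t + v t))
        (fun t => (B (U t) (u t) + B (U t) (v t)) + (B (V t) (u t) + B (V t) (v t)))
        (Set.uIcc 0 1) := by
      intro t ht
      rw [Set.uIcc_of_le zero_le_one] at ht
      have hadd : (∫ s in (0:ℝ)..t, (u s + v s)) = U t + V t :=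
        intervalIntegral.integral_add (hmono t ht hu) (hmono t ht hv)
      simp only [hadd, map_add, ContinuousLinearMap.add_apply]
      abel
    rw [intervalIntegral.integral_congr h1,
      intervalIntegral.integral_add (hUu.add hUv) (hVu.add hVv),
      intervalIntegral.integral_add hUu hUv, intervalIntegral.integral_add hVu hVv]
  have hadd1 : (∫ t in (0:ℝ)..1, (u t + v t))
      = (∫ t in (0:ℝ)..1, u t) + (∫ t in (0:ℝ)..1, v t) :=
    intervalIntegral.integral_add hu hv
  simp only [endpointMap, ← hB]
  rw [hadd1, hsplit, cross1, cross2]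
  simp only [add_zero, zero_add, smul_add]
  abel
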